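/- Let M be a 3×n complex matrix all of whose entries are nonzero. Suppose that every 3×3 submatrix of M (obtained by choosing 3 columns) has either two proportional rows or two proportional columns. Then either M has two proportional rows, or the columns of M can be partitioned into at most two groups such that within each group all columns are mutually proportional. -/
import Mathlib

theorem stmt_3 (n : ℕ) (M : Matrix (Fin 3) (Fin n) ℂ)
    (hM : ∀ i j, M i j ≠ 0)
    (h : ∀ e : Fin 3 → Fin n, Function.Injective e →
      (∃ i i' : Fin 3, i ≠ i' ∧ ∃ l : ℂ,
          (∀ k : Fin 3, M i (e k) = l * M i' (e k)) ∨
          (∀ k : Fin 3, M i' (e k) = l * M i (e k))) ∨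
      (∃ k k' : Fin 3, k ≠ k' ∧ ∃ l : ℂ,
          (∀ i : Fin 3, M i (e k) = l * M i (e k')) ∨
          (∀ i : Fin 3, M i (e k') = l * M i (e k)))) :
    (∃ i i' : Fin 3, i ≠ i' ∧ ∃ l : ℂ, ∀ j, M i j = l * M i' j) ∨
    (∃ P : Fin n → Bool, ∀ j j' : Fin n, P j = P j' →
        ∃ l : ℂ, ∀ i, M i j = l * M i j') := by
  classical
  set u : Fin n → ℂ := fun j => M 0 j / M 1 j with hu
  set v : Fin n → ℂ := fun j => M 1 j / M 2 j with hv
  have hu0 : ∀ j, u j ≠ 0 := fun j => div_ne_zero (hM 0 j) (hM 1 j)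
  have hv0 : ∀ j, v j ≠ 0 := fun j => div_ne_zero (hM 1 j) (hM 2 j)
  have e01 : ∀ j, M 0 j = u j * M 1 j := fun j =>
    (div_mul_cancel₀ _ (hM 1 j)).symm
  have e12 : ∀ j, M 1 j = v j * M 2 j := fun j =>
    (div_mul_cancel₀ _ (hM 2 j)).symm
  have e02 : ∀ j, M 0 j = u j * v j * M 2 j := fun j => by
    rw [e01, e12 j]; ring
  set f : Fin n → ℂ × ℂ := fun j => (u j, v j) with hf
  have colOf : ∀ j j' : Fin n, f j = f j' → ∃ l : ℂ, ∀ i, M i j = l * M i j' := by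
    intro j j' hjj
    have huu : u j = u j' := congrArg Prod.fst hjj
    have hvv : v j = v j' := congrArg Prod.snd hjj
    refine ⟨M 2 j / M 2 j', fun i => ?_⟩
    have h2 : M 2 j = M 2 j / M 2 j' * M 2 j' := (div_mul_cancel₀ _ (hM 2 j')).symm
    fin_cases i
    · calc M 0 j = u j * v j * M 2 j := e02 j
        _ = u j' * v j' * (M 2 j / M 2 j' * M 2 j') := by rw [huu, hvv, ← h2]
        _ = M 2 j / M 2 j' * M 0 j' := by rw [e02 j']; ring
    · calc M 1 j = v j * M 2 j := e12 j
        _ = v j' * (M 2 j / M 2 j' * M 2 j') := by rw [hvv, ← h2]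
        _ = M 2 j / M 2 j' * M 1 j' := by rw [e12 j']; ring
    · exact h2
  have fOf : ∀ j j' : Fin n, (∃ l : ℂ, ∀ i, M i j = l * M i j') → f j = f j' := by
    rintro j j' ⟨l, hl⟩
    have h0 := hl 0; have h1 := hl 1; have h2 := hl 2
    have hl0 : l ≠ 0 := fun hz => hM 0 j (by rw [h0, hz, zero_mul])
    have huu : u j = u j' := by
      rw [hu]; simp only
      rw [h0, h1, mul_div_mul_left _ _ hl0]
    have hvv : v j = v j' := by
      rw [hv]; simp only
      rw [h1, h2, mul_div_mul_left _ _ hl0]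
    rw [hf]; simp only [huu, hvv]
  have key : ∀ j1 j2 j3 : Fin n, f j1 ≠ f j2 → f j1 ≠ f j3 → f j2 ≠ f j3 →
      (u j1 = u j2 ∧ u j1 = u j3) ∨ (v j1 = v j2 ∧ v j1 = v j3) ∨
      (u j1 * v j1 = u j2 * v j2 ∧ u j1 * v j1 = u j3 * v j3) := by
    intro j1 j2 j3 h12 h13 h23
    set e : Fin 3 → Fin n := ![j1, j2, j3] with he
    have he0 : e 0 = j1 := rfl
    have he1 : e 1 = j2 := rfl
    have he2 : e 2 = j3 := rfl
    have hfne : ∀ k k' : Fin 3, k ≠ k' → f (e k) ≠ f (e k') := by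
      intro k k' hkk hq
      fin_cases k <;> fin_cases k' <;>
        first
          | exact hkk rfl
          | exact h12 hq | exact h13 hq | exact h23 hq
          | exact h12 hq.symm | exact h13 hq.symm | exact h23 hq.symm
    have hinj : Function.Injective e := by
      intro x y hxy
      by_contra hne
      exact hfne x y hne (by rw [hxy])
    rcases h e hinj with ⟨i, i', hii, l, hl⟩ | ⟨k, k', hkk, l, hl⟩
    · have cross : ∀ k k' : Fin 3, M i (e k) * M i' (e k') = M i (e k') * M i' (e k) := by
        rcases hl with hl | hl <;> intro k k' <;> simp only [hl] <;> ring
      have hUU : ∀ k k' : Fin 3, M 0 (e k) * M 1 (e k') = M 0 (e k') * M 1 (e k) →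
          u (e k) = u (e k') := by
        intro k k' hc
        rw [hu]; simp only
        exact (div_eq_div_iff (hM 1 (e k)) (hM 1 (e k'))).mpr hc
      have hVV : ∀ k k' : Fin 3, M 1 (e k) * M 2 (e k') = M 1 (e k') * M 2 (e k) →
          v (e k) = v (e k') := by
        intro k k' hc
        rw [hv]; simp only
        exact (div_eq_div_iff (hM 2 (e k)) (hM 2 (e k'))).mpr hc
      have huvd : ∀ j, u j * v j = M 0 j / M 2 j := by
        intro j
        rw [hu, hv]; simp only
        rw [div_mul_div_comm, mul_comm (M 0 j) (M 1 j), mul_div_mul_left _ _ (hM 1 j)]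
      have hWW : ∀ k k' : Fin 3, M 0 (e k) * M 2 (e k') = M 0 (e k') * M 2 (e k) →
          u (e k) * v (e k) = u (e k') * v (e k') := by
        intro k k' hc
        rw [huvd, huvd]
        exact (div_eq_div_iff (hM 2 (e k)) (hM 2 (e k'))).mpr hc
      have hcases : (i = 0 ∧ i' = 1) ∨ (i = 1 ∧ i' = 0) ∨ (i = 0 ∧ i' = 2) ∨
          (i = 2 ∧ i' = 0) ∨ (i = 1 ∧ i' = 2) ∨ (i = 2 ∧ i' = 1) := by omega
      rcases hcases with ⟨rfl, rfl⟩ | ⟨rfl, rfl⟩ | ⟨rfl, rfl⟩ | ⟨rfl, rfl⟩ | ⟨rfl, rfl⟩ | ⟨rfl, rfl⟩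
      · exact Or.inl ⟨hUU 0 1 (cross 0 1), hUU 0 2 (cross 0 2)⟩
      · exact Or.inl ⟨hUU 0 1 (by linear_combination cross 1 0),
          hUU 0 2 (by linear_combination cross 2 0)⟩
      · exact Or.inr (Or.inr ⟨hWW 0 1 (cross 0 1), hWW 0 2 (cross 0 2)⟩)
      · exact Or.inr (Or.inr ⟨hWW 0 1 (by linear_combination cross 1 0),
          hWW 0 2 (by linear_combination cross 2 0)⟩)
      · exact Or.inr (Or.inl ⟨hVV 0 1 (cross 0 1), hVV 0 2 (cross 0 2)⟩)
      · exact Or.inr (Or.inl ⟨hVV 0 1 (by linear_combination cross 1 0),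
          hVV 0 2 (by linear_combination cross 2 0)⟩)
    · exfalso
      rcases hl with hl | hl
      · exact hfne k k' hkk (fOf _ _ ⟨l, hl⟩)
      · exact hfne k' k (Ne.symm hkk) (fOf _ _ ⟨l, hl⟩)
  have fst_eq : ∀ {j j' : Fin n}, f j = f j' → u j = u j' := fun hq => congrArg Prod.fst hq
  have snd_eq : ∀ {j j' : Fin n}, f j = f j' → v j = v j' := fun hq => congrArg Prod.snd hq
  by_cases h3 : ∃ j1 j2 j3 : Fin n, f j1 ≠ f j2 ∧ f j1 ≠ f j3 ∧ f j2 ≠ f j3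
  · left
    obtain ⟨j1, j2, j3, h12, h13, h23⟩ := h3
    rcases key j1 j2 j3 h12 h13 h23 with ⟨hA, _⟩ | ⟨hB, _⟩ | ⟨hC, _⟩
    · -- u j1 = u j2 : rows 0 and 1 proportional
      have hvne : v j1 ≠ v j2 := fun hveq => h12 (Prod.ext hA hveq)
      have hall : ∀ j, u j = u j1 := by
        intro j
        by_cases hj1 : f j = f j1
        · exact fst_eq hj1
        by_cases hj2 : f j = f j2
        · rw [fst_eq hj2, ← hA]
        · rcases key j1 j2 j h12 (fun hq => hj1 hq.symm) (fun hq => hj2 hq.symm) with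
            ⟨_, hA'⟩ | ⟨hB', _⟩ | ⟨hC', _⟩
          · exact hA'.symm
          · exact absurd hB' hvne
          · exact absurd (mul_left_cancel₀ (hu0 j1) (by rw [hC', hA])) hvne
      exact ⟨0, 1, by decide, u j1, fun j => by rw [e01 j, hall j]⟩
    · -- v j1 = v j2 : rows 1 and 2 proportional
      have hune : u j1 ≠ u j2 := fun hueq => h12 (Prod.ext hueq hB)
      have hall : ∀ j, v j = v j1 := by
        intro j
        by_cases hj1 : f j = f j1
        · exact snd_eq hj1
        by_cases hj2 : f j = f j2
        · rw [snd_eq hj2, ← hB]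
        · rcases key j1 j2 j h12 (fun hq => hj1 hq.symm) (fun hq => hj2 hq.symm) with
            ⟨hA', _⟩ | ⟨_, hB'⟩ | ⟨hC', _⟩
          · exact absurd hA' hune
          · exact hB'.symm
          · exact absurd (mul_right_cancel₀ (hv0 j1) (by rw [hC', hB])) hune
      exact ⟨1, 2, by decide, v j1, fun j => by rw [e12 j, hall j]⟩
    · -- u j1 * v j1 = u j2 * v j2 : rows 0 and 2 proportional
      have hune : u j1 ≠ u j2 := fun hueq =>
        h12 (Prod.ext hueq (mul_left_cancel₀ (hu0 j1) (by rw [hC, hueq])))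
      have hvne : v j1 ≠ v j2 := fun hveq =>
        h12 (Prod.ext (mul_right_cancel₀ (hv0 j1) (by rw [hC, hveq])) hveq)
      have hall : ∀ j, u j * v j = u j1 * v j1 := by
        intro j
        by_cases hj1 : f j = f j1
        · rw [fst_eq hj1, snd_eq hj1]
        by_cases hj2 : f j = f j2
        · rw [fst_eq hj2, snd_eq hj2, ← hC]
        · rcases key j1 j2 j h12 (fun hq => hj1 hq.symm) (fun hq => hj2 hq.symm) with
            ⟨hA', _⟩ | ⟨hB', _⟩ | ⟨_, hC'⟩
          · exact absurd hA' hune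
          · exact absurd hB' hvne
          · exact hC'.symm
      exact ⟨0, 2, by decide, u j1 * v j1, fun j => by rw [e02 j, hall j]⟩
  · right
    push_neg at h3
    by_cases hc : ∀ j j' : Fin n, f j = f j'
    · exact ⟨fun _ => true, fun j j' _ => colOf j j' (hc j j')⟩
    · push_neg at hc
      obtain ⟨j1, j2, hne⟩ := hc
      refine ⟨fun j => decide (f j = f j1), fun j j' hPP => colOf j j' ?_⟩
      by_cases hj : f j = f j1 <;> by_cases hj' : f j' = f j1 <;>
        simp [hj, hj'] at hPP ⊢
      exact h3 j1 j j' (fun hq => hj hq.symm) (fun hq => hj' hq.symm)
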